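/- The noreturn tag certifies that the stack never shrinks: consider an enhanced multi-pushdown system M̂ with N stacks whose global states carry, for each stack j ∈ [N], a tag r_j ∈ {willreturn, noreturn} and whose stack letters carry a tag in {willreturn, noreturn}, and suppose every step of M̂, taken on active stack s with top letter tag a_r before the step (primed components denote values after the step, a'_r the tag of the letter written), satisfies: if the action is a call then (r_s = willreturn implies r'_s = willreturn) and a'_r = r_s; if the action is internal then r'_s = r_s and a'_r = a_r; if the action is a return then r_s = willreturn and r'_s = a_r; and r'_j = r_j for every j ≠ s. Then for every infinite run of M̂, every j ∈ [N] and every position t: if r^t_j = noreturn then |w^{t'}_j| ≥ |w^t_j| for every t' > t. -/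

import Mathlib

attribute [local instance] Classical.propDecidable

/-- Actions modifying a stack with alphabet `Γ`:
`call b` pushes `b`, `ret b` pops the top letter (which must be `b`),
`internal b` replaces the top letter by `b`. -/
inductive MPSAction (Γ : Type*) : Type _
  | call : Γ → MPSAction Γ
  | ret : Γ → MPSAction Γ
  | internal : Γ → MPSAction Γ

/-- The kind of an action. -/
inductive AKind : Type
  | call : AKind
  | ret : AKind
  | internal : AKind
deriving DecidableEq

namespace MPSAction

def kind {Γ : Type*} : MPSAction Γ → AKind
  | .call _ => .call
  | .ret _ => .ret
  | .internal _ => .internal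

def letter {Γ : Type*} : MPSAction Γ → Γ
  | .call b => b
  | .ret b => b
  | .internal b => b

def mapLetter {Γ Γ' : Type*} (f : Γ → Γ') : MPSAction Γ → MPSAction Γ'
  | .call b => .call (f b)
  | .ret b => .ret (f b)
  | .internal b => .internal (f b)

end MPSAction

/-- A multi-pushdown system with `N` stacks, global states `G` and stack alphabet `Γ`:
for each stack `s`, a transition relation `Δ s ⊆ G × Γ × G × 𝔄(Γ)`. -/
structure MPS (G Γ : Type*) (N : ℕ) : Type _ where
  Δ : Fin N → Set (G × Γ × G × MPSAction Γ)

/-- A configuration: a global state together with the contents of the `N` stacks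
(a stack is a list whose head is the top). -/
abbrev MPSConfig (G Γ : Type*) (N : ℕ) := G × (Fin N → List Γ)

/-- One-step relation with respect to the `s`-th stack. -/
def MPS.Step {G Γ : Type*} {N : ℕ} (M : MPS G Γ N) (s : Fin N)
    (c c' : MPSConfig G Γ N) : Prop :=
  ∃ (a : Γ) (rest : List Γ) (act : MPSAction Γ),
    c.2 s = a :: rest ∧
    (c.1, a, c'.1, act) ∈ M.Δ s ∧
    (∀ j : Fin N, j ≠ s → c'.2 j = c.2 j) ∧
    (match act with
      | .ret b => b = a ∧ c'.2 s = rest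
      | .internal b => c'.2 s = b :: rest
      | .call b => c'.2 s = b :: a :: rest)

/-- The standard constraint that the bottom letter `bot` is never pushed, popped,
or replaced by another symbol. -/
def MPS.BotOK {G Γ : Type*} {N : ℕ} (M : MPS G Γ N) (bot : Γ) : Prop :=
  ∀ s : Fin N, ∀ x ∈ M.Δ s,
    (match x.2.2.2 with
      | MPSAction.call b => b ≠ bot
      | MPSAction.ret b => b ≠ bot
      | MPSAction.internal b => (x.2.1 = bot ↔ b = bot))

/-- An infinite sequence of configurations together with the sequence of active stacks. -/
structure MPSTrace (G Γ : Type*) (N : ℕ) : Type _ where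
  conf : ℕ → MPSConfig G Γ N
  stk : ℕ → Fin N

/-- `ρ` is an infinite run of `M`: at each step `t` the active stack is `ρ.stk t`. -/
def MPS.IsRun {G Γ : Type*} {N : ℕ} (M : MPS G Γ N) (ρ : MPSTrace G Γ N) : Prop :=
  ∀ t : ℕ, M.Step (ρ.stk t) (ρ.conf t) (ρ.conf (t + 1))

/-- An enhanced multi-pushdown system: the global states are pairs `(g, s)` and every
transition of `Δ s` starts in a global state whose second component is `s`, so the global
state determines the active stack of the next step. -/
def MPS.Enhanced {G Γ : Type*} {N : ℕ} (M : MPS (G × Fin N) Γ N) : Prop :=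
  ∀ s : Fin N, ∀ x ∈ M.Δ s, x.1.2 = s

namespace MPSTrace

variable {G Γ : Type*} {N : ℕ}

/-- Height of the `j`-th stack at position `t`. -/
def height (ρ : MPSTrace G Γ N) (j : Fin N) (t : ℕ) : ℕ := ((ρ.conf t).2 j).length

/-- The step at position `t` is a call (the active stack grows). -/
def IsCallStep (ρ : MPSTrace G Γ N) (t : ℕ) : Prop :=
  ρ.height (ρ.stk t) (t + 1) = ρ.height (ρ.stk t) t + 1

/-- The step at position `t` is internal (the active stack keeps its height). -/
def IsInternalStep (ρ : MPSTrace G Γ N) (t : ℕ) : Prop :=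
  ρ.height (ρ.stk t) (t + 1) = ρ.height (ρ.stk t) t

/-- The step at position `t` is a return (the active stack shrinks). -/
def IsReturnStep (ρ : MPSTrace G Γ N) (t : ℕ) : Prop :=
  ρ.height (ρ.stk t) (t + 1) + 1 = ρ.height (ρ.stk t) t

/-- `t'` is the abstract successor `Succ^{a,s}(t)`: defined only if `s` is active at `t`;
after a call it is the least later position where `s` is active at the same height,
after an internal action the least later position where `s` is active,
and it is undefined after a return. -/
def IsAbsSucc (ρ : MPSTrace G Γ N) (s : Fin N) (t t' : ℕ) : Prop :=
  ρ.stk t = s ∧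
  ((ρ.IsCallStep t ∧ t < t' ∧ ρ.stk t' = s ∧ ρ.height s t' = ρ.height s t ∧
      ∀ u, t < u → u < t' → ¬(ρ.stk u = s ∧ ρ.height s u = ρ.height s t)) ∨
   (ρ.IsInternalStep t ∧ t < t' ∧ ρ.stk t' = s ∧
      ∀ u, t < u → u < t' → ρ.stk u ≠ s))

/-- `t'` is the caller successor `Succ^{c,s}(t)`: the greatest position `t' < t`
where `s` is active with height one less than the height of `s` at `t`. -/
def IsCallerSucc (ρ : MPSTrace G Γ N) (s : Fin N) (t t' : ℕ) : Prop :=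
  t' < t ∧ ρ.stk t' = s ∧ ρ.height s t' + 1 = ρ.height s t ∧
  ∀ u, t' < u → u < t → ¬(ρ.stk u = s ∧ ρ.height s u + 1 = ρ.height s t)

/-- `k`-bounded runs: there are at most `k - 1` positions where a context switch occurs. -/
def KBounded (ρ : MPSTrace G Γ N) (k : ℕ) : Prop :=
  ∃ f : Fin (k - 1) → ℕ, ∀ t : ℕ, t ∉ Set.range f → ρ.stk t = ρ.stk (t + 1)

/-- `k`-phase-bounded runs: `ℕ` can be partitioned into `α ≤ k` classes such that within
each class all return actions are performed on a single stack. -/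
def KPhaseBounded (ρ : MPSTrace G Γ N) (k : ℕ) : Prop :=
  ∃ (α : ℕ) (c : ℕ → Fin α), α ≤ k ∧
    ∀ b : Fin α, ∃ s : Fin N, ∀ i : ℕ, c i = b → ρ.IsReturnStep i → ρ.stk i = s

/-- `≼`-bounded runs for a total ordering `le` of the stacks: whenever a return is
performed on a stack, every strictly smaller stack contains only bottom letters. -/
def OrderBounded (ρ : MPSTrace G Γ N) (isBot : Γ → Prop)
    (le : Fin N → Fin N → Prop) : Prop :=
  ∀ t : ℕ, ρ.IsReturnStep t → ∀ j : Fin N, le j (ρ.stk t) → j ≠ ρ.stk t →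
    ∀ a ∈ (ρ.conf t).2 j, isBot a

end MPSTrace
/-- Tags recording whether the current call will ever be returned. -/
inductive RTag : Type
  | willreturn : RTag
  | noreturn : RTag
deriving DecidableEq

/-- Tags recording whether a stack is ever active again. -/
inductive DTag : Type
  | alive : DTag
  | dead : DTag
deriving DecidableEq

/-- The hypothesis on transitions of a system whose global states carry a return tag
per stack (extracted by `rof`) and whose stack letters carry a return tag: calls push
the current tag and keep `willreturn`; internal actions keep both tags; returns are
only allowed with tag `willreturn` and restore the tag of the popped letter; tags of
inactive stacks are preserved. -/
def RTagCond {Gs Γ₀ : Type*} {N : ℕ} (M : MPS (Gs × Fin N) (Γ₀ × RTag) N)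
    (rof : Gs → Fin N → RTag) : Prop :=
  ∀ s : Fin N,
    ∀ x ∈ M.Δ s,
      (∀ j : Fin N, j ≠ s → rof x.2.2.1.1 j = rof x.1.1 j) ∧
      (match x.2.2.2 with
        | MPSAction.call b =>
            (rof x.1.1 s = RTag.willreturn → rof x.2.2.1.1 s = RTag.willreturn) ∧
            b.2 = rof x.1.1 s
        | MPSAction.internal b =>
            rof x.2.2.1.1 s = rof x.1.1 s ∧ b.2 = x.2.1.2
        | MPSAction.ret _ =>
            rof x.1.1 s = RTag.willreturn ∧ rof x.2.2.1.1 s = x.2.1.2)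

/-- The `noreturn` tag certifies that the stack never shrinks: under
the return-tag conditions on every step, along any infinite run, if the tag of stack
`j` is `noreturn` at position `t`, then the height of stack `j` never drops strictly
below its height at `t`. -/
theorem noreturn_tag_no_shrink {G₀ Γ₀ : Type*} [Fintype G₀] [Nonempty G₀] [Fintype Γ₀]
    {N : ℕ} (hN : 1 ≤ N)
    (M : MPS ((G₀ × (Fin N → RTag)) × Fin N) (Γ₀ × RTag) N) (hM : M.Enhanced)
    (hcond : RTagCond M (fun g => g.2))
    (ρ : MPSTrace ((G₀ × (Fin N → RTag)) × Fin N) (Γ₀ × RTag) N) (hρ : M.IsRun ρ)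
    (j : Fin N) (t : ℕ) (hr : (ρ.conf t).1.1.2 j = RTag.noreturn) :
    ∀ t' : ℕ, t < t' → ρ.height j t ≤ ρ.height j t' := by
  have key : ∀ u, t ≤ u → ρ.height j t ≤ ρ.height j u ∧
      (if ρ.height j u = ρ.height j t then (ρ.conf u).1.1.2 j = RTag.noreturn
       else ∃ a : Γ₀ × RTag,
         ((ρ.conf u).2 j)[ρ.height j u - ρ.height j t - 1]? = some a ∧
         a.2 = RTag.noreturn) := by
    intro u hu
    induction u with
    | zero =>
        have ht : t = 0 := Nat.le_zero.mp hu
        subst ht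
        exact ⟨le_rfl, by rw [if_pos rfl]; exact hr⟩
    | succ u ih =>
      rcases Nat.lt_or_ge u t with hlt | hge
      · have ht : t = u + 1 := by omega
        subst ht
        exact ⟨le_rfl, by rw [if_pos rfl]; exact hr⟩
      · obtain ⟨IH1, IH2⟩ := ih hge
        obtain ⟨a, rest, act, hstk, hΔ, hoth, hact⟩ := hρ u
        obtain ⟨hoff, hmatch⟩ := hcond (ρ.stk u) _ hΔ
        by_cases hsj : ρ.stk u = j
        · subst hsj
          cases act with
          | internal b =>
            obtain ⟨hrr, hbtag⟩ := hmatch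
            dsimp only at hrr hbtag
            have hlen' : ρ.height (ρ.stk u) (u + 1) = ρ.height (ρ.stk u) u := by
              simp [MPSTrace.height, hact, hstk]
            refine ⟨by omega, ?_⟩
            rw [hlen']
            by_cases hn : ρ.height (ρ.stk u) u = ρ.height (ρ.stk u) t
            · rw [if_pos hn] at IH2 ⊢
              rw [hrr]; exact IH2
            · rw [if_neg hn] at IH2 ⊢
              obtain ⟨c, hc, hc2⟩ := IH2
              rw [hstk] at hc
              rw [hact]
              cases hi : ρ.height (ρ.stk u) u - ρ.height (ρ.stk u) t - 1 with
              | zero =>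
                  rw [hi, List.getElem?_cons_zero] at hc
                  refine ⟨b, by rw [List.getElem?_cons_zero], ?_⟩
                  rw [hbtag]
                  have : c = a := (Option.some.inj hc).symm
                  rw [← this]; exact hc2
              | succ m =>
                  rw [hi, List.getElem?_cons_succ] at hc
                  exact ⟨c, by rw [List.getElem?_cons_succ]; exact hc, hc2⟩
          | call b =>
            obtain ⟨hwr, hbtag⟩ := hmatch
            dsimp only at hwr hbtag
            have hlen' : ρ.height (ρ.stk u) (u + 1) = ρ.height (ρ.stk u) u + 1 := by
              simp [MPSTrace.height, hact, hstk]
            refine ⟨by omega, ?_⟩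
            rw [if_neg (by omega)]
            rw [← hstk] at hact
            by_cases hn : ρ.height (ρ.stk u) u = ρ.height (ρ.stk u) t
            · rw [if_pos hn] at IH2
              have hi : ρ.height (ρ.stk u) (u + 1) - ρ.height (ρ.stk u) t - 1 = 0 := by
                omega
              rw [hi, hact, List.getElem?_cons_zero]
              exact ⟨b, rfl, by rw [hbtag]; exact IH2⟩
            · rw [if_neg hn] at IH2
              obtain ⟨c, hc, hc2⟩ := IH2
              have hi : ρ.height (ρ.stk u) (u + 1) - ρ.height (ρ.stk u) t - 1
                  = (ρ.height (ρ.stk u) u - ρ.height (ρ.stk u) t - 1) + 1 := by omega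
              rw [hi, hact, List.getElem?_cons_succ]
              exact ⟨c, hc, hc2⟩
          | ret b =>
            obtain ⟨hba, hact⟩ := hact
            obtain ⟨hwr, hrr⟩ := hmatch
            dsimp only at hwr hrr
            have hn : ρ.height (ρ.stk u) u ≠ ρ.height (ρ.stk u) t := by
              intro hn
              rw [if_pos hn] at IH2
              exact absurd (hwr.symm.trans IH2) (by decide)
            rw [if_neg hn] at IH2
            obtain ⟨c, hc, hc2⟩ := IH2
            rw [hstk] at hc
            have hlen' : ρ.height (ρ.stk u) (u + 1) + 1 = ρ.height (ρ.stk u) u := by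
              simp [MPSTrace.height, hact, hstk]
            refine ⟨by omega, ?_⟩
            by_cases hn2 : ρ.height (ρ.stk u) (u + 1) = ρ.height (ρ.stk u) t
            · rw [if_pos hn2]
              have hi : ρ.height (ρ.stk u) u - ρ.height (ρ.stk u) t - 1 = 0 := by omega
              rw [hi, List.getElem?_cons_zero] at hc
              have hca : c = a := (Option.some.inj hc).symm
              rw [hrr, ← hca]; exact hc2
            · rw [if_neg hn2]
              have hi : ρ.height (ρ.stk u) u - ρ.height (ρ.stk u) t - 1
                  = (ρ.height (ρ.stk u) (u + 1) - ρ.height (ρ.stk u) t - 1) + 1 := by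
                omega
              rw [hi, List.getElem?_cons_succ] at hc
              rw [hact]
              exact ⟨c, hc, hc2⟩
        · have hstack_eq : (ρ.conf (u + 1)).2 j = (ρ.conf u).2 j := hoth j (Ne.symm hsj)
          have heq : ρ.height j (u + 1) = ρ.height j u := by
            simp [MPSTrace.height, hstack_eq]
          have htag : (ρ.conf (u + 1)).1.1.2 j = (ρ.conf u).1.1.2 j := by
            have := hoff j (Ne.symm hsj); dsimp only at this; exact this
          refine ⟨by omega, ?_⟩
          rw [heq, hstack_eq, htag]
          exact IH2
  intro t' ht'
  exact (key t' ht'.le).1
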